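/- Suppose that for the solution ({x_n},{y_n}) there exist constants M1, M2 > 0 such that M1·y_n ≤ x_n ≤ M2·y_n for all n ∈ ℕ. Suppose further that A > 0 and that there exists a positive integer η such that for every sequence {c_m}_{m=1}^∞ with c_m ∈ I_β ∪ I_γ for all m, there exist positive integers N1 ≤ N2 ≤ η with Σ_{m=N1}^{N2} c_m ∈ I_B ∪ I_C. Then there exist M > 0 and N ∈ ℕ such that x_n ≤ M and y_n ≤ M for all n > N. -/

import Mathlib

open Finset

/-- The index set of the coefficient function `f` on `{1, …, k}`:
the set of indices `i ∈ {1, …, k}` with `f i > 0`. -/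
noncomputable def indexSet (k : ℕ) (f : ℕ → ℝ) : Finset ℕ :=
  (Finset.Icc 1 k).filter fun i => 0 < f i

/-- The iteration condition: for every sequence `c` (indexed by `1, 2, …`)
taking values in `S`, there exist positive integers `N1 ≤ N2 ≤ η` such that
`∑_{m=N1}^{N2} c m ∈ T`. -/
def iterCond (η : ℕ) (S T : Finset ℕ) : Prop :=
  ∀ c : ℕ → ℕ, (∀ m, 1 ≤ m → c m ∈ S) →
    ∃ N1 N2 : ℕ, 0 < N1 ∧ N1 ≤ N2 ∧ N2 ≤ η ∧ (∑ m ∈ Finset.Icc N1 N2, c m) ∈ T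

/-- auxiliary affine recursion for lower bounds along the chain -/
noncomputable def bSeq (A' α' : ℝ) : ℕ → ℝ
  | 0 => 0
  | m + 1 => A' * bSeq A' α' m + α'

set_option maxHeartbeats 1600000 in
theorem stmt_0
    (k : ℕ) (hk : 0 < k)
    (α A p q : ℝ) (β γ B C δ ε D E : ℕ → ℝ)
    (hα : 0 ≤ α) (hA : 0 ≤ A) (hp : 0 ≤ p) (hq : 0 ≤ q)
    (hβ : ∀ i, 0 ≤ β i) (hγ : ∀ i, 0 ≤ γ i) (hB : ∀ j, 0 ≤ B j) (hC : ∀ j, 0 ≤ C j)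
    (hδ : ∀ i, 0 ≤ δ i) (hε : ∀ i, 0 ≤ ε i) (hD : ∀ j, 0 ≤ D j) (hE : ∀ j, 0 ≤ E j)
    (x y : ℕ → ℝ)
    (hxnn : ∀ n, 0 ≤ x n) (hynn : ∀ n, 0 ≤ y n)
    (hxden : ∀ n, k ≤ n →
      0 < A + ∑ j ∈ Icc 1 k, B j * x (n - j) + ∑ j ∈ Icc 1 k, C j * y (n - j))
    (hyden : ∀ n, k ≤ n →
      0 < q + ∑ j ∈ Icc 1 k, D j * x (n - j) + ∑ j ∈ Icc 1 k, E j * y (n - j))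
    (hxrec : ∀ n, k ≤ n → x n =
      (α + ∑ i ∈ Icc 1 k, β i * x (n - i) + ∑ i ∈ Icc 1 k, γ i * y (n - i)) /
      (A + ∑ j ∈ Icc 1 k, B j * x (n - j) + ∑ j ∈ Icc 1 k, C j * y (n - j)))
    (hyrec : ∀ n, k ≤ n → y n =
      (p + ∑ i ∈ Icc 1 k, δ i * x (n - i) + ∑ i ∈ Icc 1 k, ε i * y (n - i)) /
      (q + ∑ j ∈ Icc 1 k, D j * x (n - j) + ∑ j ∈ Icc 1 k, E j * y (n - j)))
    (M1 M2 : ℝ) (hM1 : 0 < M1) (hM2 : 0 < M2)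
    (hcmp : ∀ n, M1 * y n ≤ x n ∧ x n ≤ M2 * y n)
    (hApos : 0 < A)
    (hη : ∃ η : ℕ, 0 < η ∧
      iterCond η (indexSet k β ∪ indexSet k γ) (indexSet k B ∪ indexSet k C)) :
    ∃ M : ℝ, 0 < M ∧ ∃ N : ℕ, ∀ n, N < n → x n ≤ M ∧ y n ≤ M := by
  obtain ⟨η, hηpos, hIter⟩ := hη
  have hyx : ∀ n, y n ≤ x n / M1 := fun n => (le_div_iff₀' hM1).2 (hcmp n).1
  have hxy : ∀ n, x n / M2 ≤ y n := fun n => (div_le_iff₀' hM2).2 (hcmp n).2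
  set S := indexSet k β ∪ indexSet k γ with hSdef
  set T := indexSet k B ∪ indexSet k C with hTdef
  rcases S.eq_empty_or_nonempty with hS | hS
  · -- degenerate case: all β, γ vanish on Icc 1 k
    have hze : ∀ i ∈ Icc 1 k, β i = 0 ∧ γ i = 0 := by
      intro i hi
      constructor
      · by_contra h
        have hb : 0 < β i := lt_of_le_of_ne (hβ i) (Ne.symm h)
        have : i ∈ S := Finset.mem_union.2 (Or.inl (by
          unfold indexSet; exact Finset.mem_filter.2 ⟨hi, hb⟩))
        rw [hS] at this
        exact absurd this (Finset.notMem_empty i)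
      · by_contra h
        have hb : 0 < γ i := lt_of_le_of_ne (hγ i) (Ne.symm h)
        have : i ∈ S := Finset.mem_union.2 (Or.inr (by
          unfold indexSet; exact Finset.mem_filter.2 ⟨hi, hb⟩))
        rw [hS] at this
        exact absurd this (Finset.notMem_empty i)
    have hxb : ∀ n, k ≤ n → x n ≤ α / A := by
      intro n hn
      have hd := hxden n hn
      have hnum : α + ∑ i ∈ Icc 1 k, β i * x (n - i) + ∑ i ∈ Icc 1 k, γ i * y (n - i) = α := by
        have h1 : ∑ i ∈ Icc 1 k, β i * x (n - i) = 0 :=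
          Finset.sum_eq_zero fun i hi => by rw [(hze i hi).1, zero_mul]
        have h2 : ∑ i ∈ Icc 1 k, γ i * y (n - i) = 0 :=
          Finset.sum_eq_zero fun i hi => by rw [(hze i hi).2, zero_mul]
        rw [h1, h2]; ring
      have hAle : A ≤ A + ∑ j ∈ Icc 1 k, B j * x (n - j) + ∑ j ∈ Icc 1 k, C j * y (n - j) := by
        have s1 : 0 ≤ ∑ j ∈ Icc 1 k, B j * x (n - j) :=
          Finset.sum_nonneg fun j _ => mul_nonneg (hB j) (hxnn _)
        have s2 : 0 ≤ ∑ j ∈ Icc 1 k, C j * y (n - j) :=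
          Finset.sum_nonneg fun j _ => mul_nonneg (hC j) (hynn _)
        linarith
      calc x n = α / (A + ∑ j ∈ Icc 1 k, B j * x (n - j) + ∑ j ∈ Icc 1 k, C j * y (n - j)) := by
            rw [hxrec n hn, hnum]
        _ ≤ α / A := div_le_div_of_nonneg_left hα hApos hAle
    refine ⟨α / A + α / (A * M1) + 1, by positivity, k, fun n hn => ?_⟩
    have hx := hxb n (le_of_lt hn)
    have hy : y n ≤ α / (A * M1) := by
      have h1 := hyx n
      have h2 : x n / M1 ≤ (α / A) / M1 := by gcongr
      have h3 : (α / A) / M1 = α / (A * M1) := by rw [div_div]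
      linarith
    have hxa : 0 ≤ α / (A * M1) := by positivity
    have hya : 0 ≤ α / A := by positivity
    constructor <;> linarith
  · -- main case
    obtain ⟨s0, hs0⟩ := hS
    by_contra hcon
    push_neg at hcon
    -- the sequence x is unbounded
    have Hx : ∀ M0 : ℝ, ∃ n, M0 < x n := by
      intro M0
      set M' := max (max M0 (M0 / M1)) 0 + 1 with hM'def
      have hM'1 : M0 ≤ max (max M0 (M0 / M1)) 0 := le_trans (le_max_left _ _) (le_max_left _ _)
      have hM'2 : M0 / M1 ≤ max (max M0 (M0 / M1)) 0 :=
        le_trans (le_max_right _ _) (le_max_left _ _)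
      have hM'0 : (0:ℝ) ≤ max (max M0 (M0 / M1)) 0 := le_max_right _ _
      have hM'pos : 0 < M' := by rw [hM'def]; linarith only [hM'0]
      obtain ⟨n, _, hn2⟩ := hcon M' hM'pos 0
      by_cases hxc : x n ≤ M'
      · have hy := hn2 hxc
        refine ⟨n, ?_⟩
        have h2 := (hcmp n).1
        have h4 : M1 * (M0 / M1) < M1 * y n := by
          apply mul_lt_mul_of_pos_left _ hM1
          rw [hM'def] at hy; linarith only [hy, hM'2]
        have h5 : M1 * (M0 / M1) = M0 := by field_simp
        linarith only [h2, h4, h5]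
      · push_neg at hxc
        exact ⟨n, by rw [hM'def] at hxc; linarith only [hxc, hM'1]⟩
    -- membership facts
    have hmemS : ∀ i ∈ S, 1 ≤ i ∧ i ≤ k ∧ 0 < β i + γ i / M1 := by
      intro i hi
      rcases Finset.mem_union.1 hi with h | h <;>
        simp only [indexSet, Finset.mem_filter, Finset.mem_Icc] at h
      · exact ⟨h.1.1, h.1.2, by
          have := div_nonneg (hγ i) hM1.le; linarith [h.2]⟩
      · exact ⟨h.1.1, h.1.2, by
          have := div_pos h.2 hM1; linarith [hβ i]⟩
    have hmemT : ∀ j ∈ T, 1 ≤ j ∧ j ≤ k ∧ 0 < B j + C j / M2 := by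
      intro j hj
      rcases Finset.mem_union.1 hj with h | h <;>
        simp only [indexSet, Finset.mem_filter, Finset.mem_Icc] at h
      · exact ⟨h.1.1, h.1.2, by
          have := div_nonneg (hC j) hM2.le; linarith [h.2]⟩
      · exact ⟨h.1.1, h.1.2, by
          have := div_pos h.2 hM2; linarith [hB j]⟩
    have hTne : T.Nonempty := by
      obtain ⟨N1, N2, _, _, _, hmem⟩ := hIter (fun _ => s0) (fun m _ => hs0)
      exact ⟨_, hmem⟩
    -- constants
    have hkpos : (0:ℝ) < (k:ℝ) := Nat.cast_pos.2 hk
    set K := ∑ i ∈ Icc 1 k, (β i + γ i / M1) with hKdef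
    have hK0 : 0 ≤ K :=
      Finset.sum_nonneg fun i _ => add_nonneg (hβ i) (div_nonneg (hγ i) hM1.le)
    set Kmax := K + 1 with hKmaxdef
    have hKmax : 0 < Kmax := by rw [hKmaxdef]; linarith
    have hcoefK : ∀ i ∈ Icc 1 k, β i + γ i / M1 ≤ Kmax := by
      intro i hi
      have := Finset.single_le_sum
        (f := fun i => β i + γ i / M1)
        (fun j _ => add_nonneg (hβ j) (div_nonneg (hγ j) hM1.le)) hi
      rw [hKmaxdef]; rw [hKdef]; linarith
    set A' := A / ((k:ℝ) * Kmax) with hA'def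
    have hA'pos : 0 < A' := div_pos hApos (mul_pos hkpos hKmax)
    set α' := α / ((k:ℝ) * Kmax) with hα'def
    have hα'0 : 0 ≤ α' := div_nonneg hα (mul_pos hkpos hKmax).le
    set d0 := T.inf' hTne (fun j => B j + C j / M2) with hd0def
    have hd0pos : 0 < d0 := (Finset.lt_inf'_iff hTne).2 fun j hj => (hmemT j hj).2.2
    have hb0 : ∀ m, 0 ≤ bSeq A' α' m := by
      intro m
      induction m with
      | zero => simp [bSeq]
      | succ m ih =>
        have := mul_nonneg hA'pos.le ih
        simp only [bSeq]; linarith only [this, hα'0]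
    have hrne : (Finset.range (η + 1)).Nonempty := ⟨0, Finset.mem_range.2 (Nat.succ_pos η)⟩
    set aLow := (Finset.range (η + 1)).inf' hrne (fun m => A' ^ m) with haLowdef
    have haLowpos : 0 < aLow := (Finset.lt_inf'_iff hrne).2 fun m _ => pow_pos hA'pos m
    have haLowle : ∀ m, m ≤ η → aLow ≤ A' ^ m := fun m hm =>
      Finset.inf'_le _ (Finset.mem_range.2 (Nat.lt_succ_of_le hm))
    set bHigh := (Finset.range (η + 1)).sup' hrne (bSeq A' α') with hbHighdef
    have hbHighle : ∀ m, m ≤ η → bSeq A' α' m ≤ bHigh := fun m hm =>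
      Finset.le_sup' _ (Finset.mem_range.2 (Nat.lt_succ_of_le hm))
    have hbHigh0 : 0 ≤ bHigh := by
      have := hbHighle 0 (Nat.zero_le η)
      simpa [bSeq] using this
    set c1 := d0 * aLow ^ 2 / 4 with hc1def
    have hc1pos : 0 < c1 := by rw [hc1def]; positivity
    have hXsne : (Finset.range (k * (η + 1) + 1)).Nonempty :=
      ⟨0, Finset.mem_range.2 (Nat.succ_pos _)⟩
    set Xs := (Finset.range (k * (η + 1) + 1)).sup' hXsne x with hXsdef
    set M0 := max (max Xs ((bHigh + α / A + 1) / aLow))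
      (max (2 * bHigh / aLow) ((K + 1) / c1 + α + 1)) with hM0def
    have hM0Xs : Xs ≤ M0 := le_trans (le_max_left _ _) (le_max_left _ _)
    have hMthr : (bHigh + α / A + 1) / aLow ≤ M0 :=
      le_trans (le_max_right _ _) (le_max_left _ _)
    have hMv : 2 * bHigh / aLow ≤ M0 := le_trans (le_max_left _ _) (le_max_right _ _)
    have hM0c : (K + 1) / c1 + α + 1 ≤ M0 := le_trans (le_max_right _ _) (le_max_right _ _)
    obtain ⟨n₀, hXgt, hbefore⟩ : ∃ n₀, M0 < x n₀ ∧ ∀ m, m < n₀ → x m ≤ M0 := by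
      obtain ⟨n, hn⟩ := Hx M0
      have hex : ∃ n, M0 < x n := ⟨n, hn⟩
      exact ⟨Nat.find hex, Nat.find_spec hex, fun m hm => not_lt.1 (Nat.find_min hex hm)⟩
    set X := x n₀ with hXdef
    have hXM0 : M0 < X := hXgt
    have hM0nn : 0 ≤ M0 := by
      have h1 : x 0 ≤ Xs := Finset.le_sup' x (Finset.mem_range.2 (Nat.succ_pos _))
      have h2 := hxnn 0
      linarith only [h1, h2, hM0Xs]
    have hXpos : 0 < X := lt_of_le_of_lt hM0nn hXM0
    have hn₀big : k * (η + 1) < n₀ := by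
      by_contra hle
      push_neg at hle
      have h1 : x n₀ ≤ Xs := Finset.le_sup' x (Finset.mem_range.2 (Nat.lt_succ_of_le hle))
      linarith only [h1, hM0Xs, hXgt]
    have hηk : η * k + k < n₀ := by
      have h : η * k + k = k * (η + 1) := by ring
      rw [h]; exact hn₀big
    -- numeric thresholds
    have hstep_thr : bHigh + α / A + 1 < aLow * X := by
      have h1 : (bHigh + α / A + 1) / aLow < X := lt_of_le_of_lt hMthr hXM0
      rw [div_lt_iff₀ haLowpos] at h1; linarith only [h1]
    have h2b : 2 * bHigh < aLow * X := by
      have h1 : 2 * bHigh / aLow < X := lt_of_le_of_lt hMv hXM0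
      rw [div_lt_iff₀ haLowpos] at h1; linarith only [h1]
    have hdivc1 : (0:ℝ) ≤ (K + 1) / c1 := by positivity
    have hαX : α + 1 < X := by linarith only [hXM0, hM0c, hdivc1]
    have hKX : K + 1 < c1 * X := by
      have h1 : (K + 1) / c1 < X := by linarith only [hXM0, hM0c, hα]
      rw [div_lt_iff₀ hc1pos] at h1; linarith only [h1]
    have hαA0 : 0 ≤ α / A := by positivity
    -- the step lemma
    have hstep : ∀ n, k ≤ n → α / A < x n →
        ∃ i ∈ S, (A * x n - α) / ((k:ℝ) * Kmax) ≤ x (n - i) := by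
      intro n hn hbig
      have hd := hxden n hn
      have hxd : x n * (A + ∑ j ∈ Icc 1 k, B j * x (n - j) + ∑ j ∈ Icc 1 k, C j * y (n - j))
          = α + ∑ i ∈ Icc 1 k, β i * x (n - i) + ∑ i ∈ Icc 1 k, γ i * y (n - i) := by
        rw [hxrec n hn, div_mul_cancel₀ _ (ne_of_gt hd)]
      have hden_ge : A ≤ A + ∑ j ∈ Icc 1 k, B j * x (n - j) + ∑ j ∈ Icc 1 k, C j * y (n - j) := by
        have s1 : 0 ≤ ∑ j ∈ Icc 1 k, B j * x (n - j) :=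
          Finset.sum_nonneg fun j _ => mul_nonneg (hB j) (hxnn _)
        have s2 : 0 ≤ ∑ j ∈ Icc 1 k, C j * y (n - j) :=
          Finset.sum_nonneg fun j _ => mul_nonneg (hC j) (hynn _)
        linarith only [s1, s2]
      have hxA : x n * A ≤ α + ∑ i ∈ Icc 1 k, β i * x (n - i)
          + ∑ i ∈ Icc 1 k, γ i * y (n - i) := by
        calc x n * A ≤ x n * (A + ∑ j ∈ Icc 1 k, B j * x (n - j)
              + ∑ j ∈ Icc 1 k, C j * y (n - j)) :=
            mul_le_mul_of_nonneg_left hden_ge (hxnn n)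
          _ = _ := hxd
      have hsum2 : ∑ i ∈ Icc 1 k, γ i * y (n - i) ≤ ∑ i ∈ Icc 1 k, (γ i / M1) * x (n - i) := by
        apply Finset.sum_le_sum
        intro i _
        have h1 : γ i * y (n - i) ≤ γ i * (x (n - i) / M1) :=
          mul_le_mul_of_nonneg_left (hyx (n - i)) (hγ i)
        have h2 : γ i * (x (n - i) / M1) = (γ i / M1) * x (n - i) := by ring
        linarith only [h1, h2]
      have hid : ∑ i ∈ Icc 1 k, β i * x (n - i) + ∑ i ∈ Icc 1 k, (γ i / M1) * x (n - i)
          = ∑ i ∈ Icc 1 k, (β i + γ i / M1) * x (n - i) := by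
        rw [← Finset.sum_add_distrib]
        exact Finset.sum_congr rfl fun i _ => by ring
      have hsum : A * x n - α ≤ ∑ i ∈ Icc 1 k, (β i + γ i / M1) * x (n - i) := by
        linarith only [hxA, hsum2, hid]
      have hIcc_ne : (Icc 1 k).Nonempty := ⟨1, Finset.mem_Icc.2 ⟨le_refl 1, hk⟩⟩
      have hcard : (Icc 1 k).card = k := by rw [Nat.card_Icc]; omega
      have hconstsum : ∑ _i ∈ Icc 1 k, (A * x n - α) / (k:ℝ) = A * x n - α := by
        rw [Finset.sum_const, hcard, nsmul_eq_mul]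
        field_simp
      have hsum' : ∑ _i ∈ Icc 1 k, (A * x n - α) / (k:ℝ)
          ≤ ∑ i ∈ Icc 1 k, (β i + γ i / M1) * x (n - i) := by
        rw [hconstsum]; exact hsum
      obtain ⟨i, hiIcc, hile⟩ := Finset.exists_le_of_sum_le hIcc_ne hsum'
      have hpos : 0 < A * x n - α := by
        rw [div_lt_iff₀ hApos] at hbig
        linarith only [hbig]
      have hcoefpos : 0 < β i + γ i / M1 := by
        by_contra hcp
        push_neg at hcp
        have hcz : β i + γ i / M1 = 0 :=
          le_antisymm hcp (add_nonneg (hβ i) (div_nonneg (hγ i) hM1.le))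
        rw [hcz, zero_mul] at hile
        have : 0 < (A * x n - α) / (k:ℝ) := div_pos hpos hkpos
        linarith only [hile, this]
      have hiS : i ∈ S := by
        have hβγ : 0 < β i ∨ 0 < γ i := by
          by_contra hno
          push_neg at hno
          have hb0' : β i = 0 := le_antisymm hno.1 (hβ i)
          have hg0' : γ i = 0 := le_antisymm hno.2 (hγ i)
          rw [hb0', hg0'] at hcoefpos
          simp at hcoefpos
        rcases hβγ with h | h
        · exact Finset.mem_union.2 (Or.inl (by
            unfold indexSet; exact Finset.mem_filter.2 ⟨hiIcc, h⟩))
        · exact Finset.mem_union.2 (Or.inr (by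
            unfold indexSet; exact Finset.mem_filter.2 ⟨hiIcc, h⟩))
      refine ⟨i, hiS, ?_⟩
      have hxi0 : 0 ≤ x (n - i) := hxnn _
      have hcK : β i + γ i / M1 ≤ Kmax := hcoefK i hiIcc
      rw [div_le_iff₀ (mul_pos hkpos hKmax)]
      rw [div_le_iff₀ hkpos] at hile
      have h9 : (β i + γ i / M1) * x (n - i) * (k:ℝ) ≤ Kmax * x (n - i) * (k:ℝ) :=
        mul_le_mul_of_nonneg_right (mul_le_mul_of_nonneg_right hcK hxi0) hkpos.le
      exact (hile.trans h9).trans_eq (by ring)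
    -- chain construction
    have chain : ∀ m, m ≤ η → ∃ cs : ℕ → ℕ, (∀ j, cs j ∈ S) ∧
        ∀ j, j ≤ m → (∑ i ∈ Icc 1 j, cs i) ≤ j * k ∧
          A' ^ j * X - bSeq A' α' j ≤ x (n₀ - ∑ i ∈ Icc 1 j, cs i) := by
      intro m
      induction m with
      | zero =>
        intro _
        refine ⟨fun _ => s0, fun _ => hs0, fun j hj => ?_⟩
        obtain rfl : j = 0 := Nat.le_zero.1 hj
        have hIcc0 : (Icc 1 0 : Finset ℕ) = ∅ := Finset.Icc_eq_empty (by omega)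
        rw [hIcc0]
        simp [bSeq]
        exact hXdef.le
      | succ m ih =>
        intro hm1
        obtain ⟨cs, hcsS, hcs⟩ := ih (Nat.le_of_succ_le hm1)
        obtain ⟨hsm, hxm⟩ := hcs m (le_refl m)
        have hmη : m ≤ η := Nat.le_of_succ_le hm1
        have hsmη : (∑ i ∈ Icc 1 m, cs i) ≤ η * k :=
          le_trans hsm (Nat.mul_le_mul_right k hmη)
        have hnm_k : k ≤ n₀ - ∑ i ∈ Icc 1 m, cs i := by
          have h1 : (∑ i ∈ Icc 1 m, cs i) + k ≤ η * k + k := Nat.add_le_add_right hsmη k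
          omega
        have hxmA : α / A < x (n₀ - ∑ i ∈ Icc 1 m, cs i) := by
          have h1 : aLow * X ≤ A' ^ m * X :=
            mul_le_mul_of_nonneg_right (haLowle m hmη) hXpos.le
          have h2 : bSeq A' α' m ≤ bHigh := hbHighle m hmη
          linarith only [hxm, h1, h2, hstep_thr]
        obtain ⟨i, hiS, hix⟩ := hstep (n₀ - ∑ i ∈ Icc 1 m, cs i) hnm_k hxmA
        have hik : i ≤ k := (hmemS i hiS).2.1
        refine ⟨Function.update cs (m + 1) i, ?_, ?_⟩
        · intro j
          rcases eq_or_ne j (m + 1) with rfl | hne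
          · rw [Function.update_self]; exact hiS
          · rw [Function.update_of_ne hne]; exact hcsS j
        · intro j hj
          rcases Nat.lt_or_ge j (m + 1) with hjm | hjm
          · have hsum_eq : ∑ i' ∈ Icc 1 j, Function.update cs (m + 1) i i'
                = ∑ i' ∈ Icc 1 j, cs i' :=
              Finset.sum_congr rfl fun i' hi' =>
                Function.update_of_ne (by
                  have := (Finset.mem_Icc.1 hi').2; omega) _ _
            rw [hsum_eq]
            exact hcs j (by omega)
          · have hj1 : j = m + 1 := le_antisymm hj hjm
            subst hj1
            have hsplit : ∑ i' ∈ Icc 1 (m + 1), Function.update cs (m + 1) i i'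
                = (∑ i' ∈ Icc 1 m, cs i') + i := by
              rw [Finset.sum_Icc_succ_top (by omega : 1 ≤ m + 1)]
              congr 1
              · exact Finset.sum_congr rfl fun i' hi' =>
                  Function.update_of_ne (by
                    have := (Finset.mem_Icc.1 hi').2; omega) _ _
              · exact Function.update_self _ _ _
            rw [hsplit]
            constructor
            · calc (∑ i' ∈ Icc 1 m, cs i') + i ≤ m * k + k := Nat.add_le_add hsm hik
                _ = (m + 1) * k := by ring
            · have hsub : n₀ - ((∑ i' ∈ Icc 1 m, cs i') + i)
                  = (n₀ - ∑ i' ∈ Icc 1 m, cs i') - i := (Nat.sub_sub n₀ _ i).symm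
              rw [hsub]
              refine le_trans ?_ hix
              have hmono : (A * (A' ^ m * X - bSeq A' α' m) - α) / ((k:ℝ) * Kmax)
                  ≤ (A * x (n₀ - ∑ i' ∈ Icc 1 m, cs i') - α) / ((k:ℝ) * Kmax) := by
                gcongr
              refine le_trans (le_of_eq ?_) hmono
              have hne' : (k:ℝ) * Kmax ≠ 0 := (mul_pos hkpos hKmax).ne'
              simp only [bSeq]
              rw [hA'def, hα'def]
              field_simp
              have e : (k:ℝ) * (k:ℝ)⁻¹ * (Kmax * Kmax⁻¹) = 1 := by
                rw [mul_inv_cancel₀ hkpos.ne', mul_inv_cancel₀ hKmax.ne', one_mul]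
              clear_value Kmax
              linear_combination (A * A ^ m * (k:ℝ)⁻¹ ^ m * Kmax⁻¹ ^ m * X) * e
        -- end chain
    obtain ⟨cs, hcsS, hcs⟩ := chain η le_rfl
    obtain ⟨N1, N2, hN1, hN12, hN2η, hjT⟩ := hIter cs (fun m _ => hcsS m)
    have hjmem := hmemT _ hjT
    have hd0le : d0 ≤ B (∑ m ∈ Icc N1 N2, cs m) + C (∑ m ∈ Icc N1 N2, cs m) / M2 :=
      Finset.inf'_le _ hjT
    have hsum_split : (∑ i ∈ Icc 1 (N1 - 1), cs i) + (∑ m ∈ Icc N1 N2, cs m)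
        = ∑ i ∈ Icc 1 N2, cs i := by
      have h1 : (Icc 1 (N1 - 1) : Finset ℕ) = Ioc 0 (N1 - 1) := Finset.Icc_add_one_left_eq_Ioc 0 _
      have h2 : (Icc N1 N2 : Finset ℕ) = Ioc (N1 - 1) N2 := by
        rw [← Finset.Icc_add_one_left_eq_Ioc]; congr 1; omega
      have h3 : (Icc 1 N2 : Finset ℕ) = Ioc 0 N2 := Finset.Icc_add_one_left_eq_Ioc 0 _
      rw [h1, h2, h3]
      exact Finset.sum_Ioc_consecutive _ (Nat.zero_le _) (by omega)
    obtain ⟨hs1, hx1⟩ := hcs (N1 - 1) (by omega)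
    obtain ⟨hs2, hx2⟩ := hcs N2 hN2η
    have hs2n : (∑ i ∈ Icc 1 N2, cs i) + k < n₀ := by
      have h1 : (∑ i ∈ Icc 1 N2, cs i) + k ≤ N2 * k + k := Nat.add_le_add_right hs2 k
      have h2 : N2 * k ≤ η * k := Nat.mul_le_mul_right k hN2η
      omega
    set n' := n₀ - ∑ i ∈ Icc 1 (N1 - 1), cs i with hn'def
    have hn'k : k ≤ n' := by
      have h0 : (∑ i ∈ Icc 1 (N1 - 1), cs i) ≤ ∑ i ∈ Icc 1 N2, cs i := by omega
      omega
    have hn'j : n' - (∑ m ∈ Icc N1 N2, cs m) = n₀ - ∑ i ∈ Icc 1 N2, cs i := by omega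
    set L := aLow * X - bHigh with hLdef
    have hLlb : ∀ m, m ≤ η → L ≤ A' ^ m * X - bSeq A' α' m := by
      intro m hm
      have h1 : aLow * X ≤ A' ^ m * X := mul_le_mul_of_nonneg_right (haLowle m hm) hXpos.le
      have h2 : bSeq A' α' m ≤ bHigh := hbHighle m hm
      rw [hLdef]; linarith only [h1, h2]
    have hL1 : L ≤ x n' := le_trans (hLlb (N1 - 1) (by omega)) hx1
    have hL2 : L ≤ x (n₀ - ∑ i ∈ Icc 1 N2, cs i) := le_trans (hLlb N2 hN2η) hx2
    have hLpos : 0 < L := by rw [hLdef]; linarith only [hstep_thr, hαA0]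
    have hd := hxden n' hn'k
    have hxeq := hxrec n' hn'k
    -- denominator lower bound
    have hden_ge : d0 * L ≤ A + ∑ j ∈ Icc 1 k, B j * x (n' - j)
        + ∑ j ∈ Icc 1 k, C j * y (n' - j) := by
      set jT := ∑ m ∈ Icc N1 N2, cs m with hjTdef
      have hjIcc : jT ∈ Icc 1 k := Finset.mem_Icc.2 ⟨hjmem.1, hjmem.2.1⟩
      have hBt : B jT * x (n' - jT) ≤ ∑ j ∈ Icc 1 k, B j * x (n' - j) :=
        Finset.single_le_sum (f := fun j => B j * x (n' - j))
          (fun j _ => mul_nonneg (hB j) (hxnn _)) hjIcc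
      have hCt : C jT * y (n' - jT) ≤ ∑ j ∈ Icc 1 k, C j * y (n' - j) :=
        Finset.single_le_sum (f := fun j => C j * y (n' - j))
          (fun j _ => mul_nonneg (hC j) (hynn _)) hjIcc
      have hyge : x (n' - jT) / M2 ≤ y (n' - jT) := hxy _
      have hw : L ≤ x (n' - jT) := by rw [hn'j]; exact hL2
      have h1 : d0 * L ≤ (B jT + C jT / M2) * x (n' - jT) :=
        mul_le_mul hd0le hw hLpos.le (le_trans hd0pos.le hd0le)
      have h2 : (B jT + C jT / M2) * x (n' - jT)
          ≤ B jT * x (n' - jT) + C jT * y (n' - jT) := by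
        have hC2 : C jT * (x (n' - jT) / M2) ≤ C jT * y (n' - jT) :=
          mul_le_mul_of_nonneg_left hyge (hC jT)
        calc (B jT + C jT / M2) * x (n' - jT)
            = B jT * x (n' - jT) + C jT * (x (n' - jT) / M2) := by ring
          _ ≤ B jT * x (n' - jT) + C jT * y (n' - jT) := add_le_add_right hC2 _
      calc d0 * L ≤ (B jT + C jT / M2) * x (n' - jT) := h1
        _ ≤ B jT * x (n' - jT) + C jT * y (n' - jT) := h2
        _ ≤ (∑ j ∈ Icc 1 k, B j * x (n' - j)) + ∑ j ∈ Icc 1 k, C j * y (n' - j) :=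
            add_le_add hBt hCt
        _ ≤ A + ∑ j ∈ Icc 1 k, B j * x (n' - j) + ∑ j ∈ Icc 1 k, C j * y (n' - j) :=
            add_le_add_left (le_add_of_nonneg_left hA) _
    -- numerator upper bound
    have hnum_le : α + ∑ i ∈ Icc 1 k, β i * x (n' - i) + ∑ i ∈ Icc 1 k, γ i * y (n' - i)
        ≤ α + K * M0 := by
      have hxb : ∀ i ∈ Icc 1 k, x (n' - i) ≤ M0 := by
        intro i hi
        apply hbefore
        have hi1 := (Finset.mem_Icc.1 hi).1
        omega
      have h1 : ∑ i ∈ Icc 1 k, β i * x (n' - i) ≤ ∑ i ∈ Icc 1 k, β i * M0 :=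
        Finset.sum_le_sum fun i hi => mul_le_mul_of_nonneg_left (hxb i hi) (hβ i)
      have h2 : ∑ i ∈ Icc 1 k, γ i * y (n' - i) ≤ ∑ i ∈ Icc 1 k, (γ i / M1) * M0 := by
        apply Finset.sum_le_sum
        intro i hi
        have ha : y (n' - i) ≤ x (n' - i) / M1 := hyx _
        have hb' : x (n' - i) / M1 ≤ M0 / M1 := by gcongr; exact hxb i hi
        have hc' : γ i * y (n' - i) ≤ γ i * (M0 / M1) :=
          mul_le_mul_of_nonneg_left (le_trans ha hb') (hγ i)
        have hd' : γ i * (M0 / M1) = (γ i / M1) * M0 := by ring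
        linarith
      have h3 : ∑ i ∈ Icc 1 k, β i * M0 + ∑ i ∈ Icc 1 k, (γ i / M1) * M0 = K * M0 := by
        rw [← Finset.sum_add_distrib, hKdef, Finset.sum_mul]
        exact Finset.sum_congr rfl fun i _ => by ring
      linarith only [h1, h2, h3]
    have hnum2 : α + ∑ i ∈ Icc 1 k, β i * x (n' - i) + ∑ i ∈ Icc 1 k, γ i * y (n' - i)
        ≤ α + K * X := by
      have hKM : K * M0 ≤ K * X := mul_le_mul_of_nonneg_left hXM0.le hK0
      linarith only [hnum_le, hKM]
    have hdpos : 0 < d0 * L := mul_pos hd0pos hLpos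
    have hxn'le : x n' * (d0 * L) ≤ α + K * X := by
      have hxd : x n' * (A + ∑ j ∈ Icc 1 k, B j * x (n' - j)
          + ∑ j ∈ Icc 1 k, C j * y (n' - j))
          = α + ∑ i ∈ Icc 1 k, β i * x (n' - i) + ∑ i ∈ Icc 1 k, γ i * y (n' - i) := by
        rw [hxeq, div_mul_cancel₀ _ (ne_of_gt hd)]
      calc x n' * (d0 * L) ≤ x n' * (A + ∑ j ∈ Icc 1 k, B j * x (n' - j)
            + ∑ j ∈ Icc 1 k, C j * y (n' - j)) :=
          mul_le_mul_of_nonneg_left hden_ge (hxnn n')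
        _ = _ := hxd
        _ ≤ α + K * X := hnum2
    have hfinal : d0 * L ^ 2 ≤ α + K * X := by
      have h1 : L * (d0 * L) ≤ x n' * (d0 * L) := mul_le_mul_of_nonneg_right hL1 hdpos.le
      linarith only [h1, hxn'le]
    have hLX : aLow * X / 2 ≤ L := by rw [hLdef]; linarith only [h2b]
    have hc1X2 : c1 * X ^ 2 ≤ α + K * X := by
      have h0 : (0:ℝ) ≤ aLow * X / 2 := by positivity
      have h1 : d0 * (aLow * X / 2) ^ 2 ≤ d0 * L ^ 2 :=
        mul_le_mul_of_nonneg_left (pow_le_pow_left₀ h0 hLX 2) hd0pos.le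
      have h2 : c1 * X ^ 2 = d0 * (aLow * X / 2) ^ 2 := by rw [hc1def]; ring
      exact h2.trans_le (h1.trans hfinal)
    have hmul : (K + 1) * X < c1 * X * X := mul_lt_mul_of_pos_right hKX hXpos
    linarith only [hmul, hc1X2, hαX, hXpos]
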